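/- For all p ≥ 0 and all C¹ functions r : [0,1] → (0,∞), the inequality (∫₀¹ r(α)^{(p+2)/(p+1)} dα)^{(p+1)/(p+2)} ≤ ∫₀¹ √(r(α)² + r'(α)²/π²) dα holds. -/

import Mathlib

open Real intervalIntegral Set MeasureTheory

private lemma final_amgm (T ρ L : ℝ) (hρ : 0 < ρ) (hT : 0 ≤ T)
    (h : π / 2 * T + π / 2 * ρ ^ 2 ≤ π * ρ * L) : Real.sqrt T ≤ L := by
  have hsq := Real.sq_sqrt hT
  have h6 : 2 * ρ * Real.sqrt T ≤ T + ρ ^ 2 := by nlinarith [sq_nonneg (Real.sqrt T - ρ)]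
  have h7 : π / 2 * (2 * ρ * Real.sqrt T) ≤ π / 2 * (T + ρ ^ 2) :=
    mul_le_mul_of_nonneg_left h6 (by positivity)
  have h9 : (π * ρ) * Real.sqrt T ≤ (π * ρ) * L := by nlinarith [Real.pi_pos]
  exact le_of_mul_le_mul_left h9 (by positivity)

private lemma two_cs (A B C D : ℝ) :
    A * B + C * D ≤ Real.sqrt (A ^ 2 + C ^ 2) * Real.sqrt (B ^ 2 + D ^ 2) := by
  have h1 : 0 ≤ A ^ 2 + C ^ 2 := by positivity
  have h2 : 0 ≤ B ^ 2 + D ^ 2 := by positivity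
  have e1 := Real.sq_sqrt h1
  have e2 := Real.sq_sqrt h2
  nlinarith [sq_nonneg (A * D - B * C),
    mul_nonneg (Real.sqrt_nonneg (A ^ 2 + C ^ 2)) (Real.sqrt_nonneg (B ^ 2 + D ^ 2)),
    sq_nonneg (Real.sqrt (A ^ 2 + C ^ 2) * Real.sqrt (B ^ 2 + D ^ 2) - (A * B + C * D))]

set_option maxHeartbeats 2000000 in
private lemma lemB (r g : ℝ → ℝ) (hrc : ContinuousOn r (Icc 0 1))
    (hgc : ContinuousOn g (Icc 0 1))
    (hd : ∀ α ∈ Ioo (0:ℝ) 1, HasDerivAt r (g α) α)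
    (hpos : ∀ α ∈ Icc (0:ℝ) 1, 0 < r α) :
    Real.sqrt (∫ α in (0:ℝ)..1, r α ^ 2) ≤
      ∫ α in (0:ℝ)..1, Real.sqrt (r α ^ 2 + g α ^ 2 / π ^ 2) := by
  have h01 : (0:ℝ) ≤ 1 := zero_le_one
  have huIcc : Set.uIcc (0:ℝ) 1 = Icc 0 1 := uIcc_of_le h01
  have intCI : ∀ {f : ℝ → ℝ}, ContinuousOn f (Icc 0 1) → IntervalIntegrable f volume 0 1 := by
    intro f hf
    exact ContinuousOn.intervalIntegrable (by rwa [huIcc])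
  -- the curve
  set X : ℝ → ℝ := fun α => r α * Real.cos (π * α) with hXdef
  set Y : ℝ → ℝ := fun α => r α * Real.sin (π * α) with hYdef
  set Xd : ℝ → ℝ := fun α => g α * Real.cos (π * α) + r α * (-Real.sin (π * α) * π) with hXddef
  set Yd : ℝ → ℝ := fun α => g α * Real.sin (π * α) + r α * (Real.cos (π * α) * π) with hYddef
  have hcos : Continuous fun t : ℝ => Real.cos (π * t) :=
    Real.continuous_cos.comp (continuous_const.mul continuous_id)
  have hsin : Continuous fun t : ℝ => Real.sin (π * t) :=
    Real.continuous_sin.comp (continuous_const.mul continuous_id)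
  have hXc : ContinuousOn X (Icc 0 1) := hrc.mul hcos.continuousOn
  have hYc : ContinuousOn Y (Icc 0 1) := hrc.mul hsin.continuousOn
  have hXdc : ContinuousOn Xd (Icc 0 1) := by
    apply ContinuousOn.add (hgc.mul hcos.continuousOn)
    exact hrc.mul ((hsin.neg.mul continuous_const).continuousOn)
  have hYdc : ContinuousOn Yd (Icc 0 1) := by
    apply ContinuousOn.add (hgc.mul hsin.continuousOn)
    exact hrc.mul ((hcos.mul continuous_const).continuousOn)
  have hπlin : ∀ α : ℝ, HasDerivAt (fun t : ℝ => π * t) π α := by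
    intro α
    simpa using (hasDerivAt_id α).const_mul π
  have hXd' : ∀ α ∈ Ioo (0:ℝ) 1, HasDerivAt X (Xd α) α := by
    intro α hα
    exact (hd α hα).mul ((hπlin α).cos)
  have hYd' : ∀ α ∈ Ioo (0:ℝ) 1, HasDerivAt Y (Yd α) α := by
    intro α hα
    exact (hd α hα).mul ((hπlin α).sin)
  -- extreme values of X
  obtain ⟨ap, hap, hmax⟩ := isCompact_Icc.exists_isMaxOn (nonempty_Icc.2 h01) hXc
  obtain ⟨am, ham, hmin⟩ := isCompact_Icc.exists_isMinOn (nonempty_Icc.2 h01) hXc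
  set M : ℝ := X ap with hMdef
  set m : ℝ := X am with hmdef
  set ρ : ℝ := (M - m) / 2 with hρdef
  set c : ℝ := (M + m) / 2 with hcdef
  have hX0 : X 0 = r 0 := by simp [hXdef]
  have hX1 : X 1 = -r 1 := by simp [hXdef, Real.cos_pi]
  have hr0 : 0 < r 0 := hpos 0 (left_mem_Icc.2 h01)
  have hr1 : 0 < r 1 := hpos 1 (right_mem_Icc.2 h01)
  have hm1 : m ≤ X 1 := hmin (right_mem_Icc.2 h01)
  have hM0 : X 0 ≤ M := hmax (left_mem_Icc.2 h01)
  have hρpos : 0 < ρ := by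
    rw [hρdef]
    have : m < 0 := by rw [hX1] at hm1; linarith
    have : 0 < M := by rw [hX0] at hM0; linarith
    linarith
  have hbnd : ∀ α ∈ Icc (0:ℝ) 1, m ≤ X α ∧ X α ≤ M := fun α hα => ⟨hmin hα, hmax hα⟩
  have hbsq : ∀ α ∈ Icc (0:ℝ) 1, (X α - c) ^ 2 ≤ ρ ^ 2 := by
    intro α hα
    obtain ⟨h1, h2⟩ := hbnd α hα
    nlinarith
  -- the antiderivative K
  set K : ℝ → ℝ := fun u => ∫ v in (0:ℝ)..u, Real.sqrt (ρ ^ 2 - v ^ 2) with hKdef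
  have hKic : Continuous fun v : ℝ => Real.sqrt (ρ ^ 2 - v ^ 2) :=
    Real.continuous_sqrt.comp (continuous_const.sub (continuous_pow 2))
  have hK : ∀ u : ℝ, HasDerivAt K (Real.sqrt (ρ ^ 2 - u ^ 2)) u := fun u =>
    (hKic.integral_hasStrictDerivAt 0 u).hasDerivAt
  have hKcont : Continuous K := continuous_iff_continuousAt.2 fun u => (hK u).continuousAt
  -- the value K ρ - K (-ρ)
  have hKval : K ρ - K (-ρ) = π / 2 * ρ ^ 2 := by
    have hint : ∀ a b : ℝ, IntervalIntegrable (fun v => Real.sqrt (ρ ^ 2 - v ^ 2)) volume a b :=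
      fun a b => hKic.intervalIntegrable a b
    have h1 : K ρ - K (-ρ) = ∫ v in (-ρ)..ρ, Real.sqrt (ρ ^ 2 - v ^ 2) := by
      rw [hKdef]
      have h2 := intervalIntegral.integral_add_adjacent_intervals (hint (-ρ) 0) (hint 0 ρ)
      have h3 : ∫ v in (-ρ)..(0:ℝ), Real.sqrt (ρ ^ 2 - v ^ 2)
          = -∫ v in (0:ℝ)..(-ρ), Real.sqrt (ρ ^ 2 - v ^ 2) := by
        rw [intervalIntegral.integral_symm]
      simp only at h2 h3 ⊢
      linarith
    have h4 : ∀ x : ℝ, Real.sqrt (ρ ^ 2 - (ρ * x) ^ 2) = ρ * Real.sqrt (1 - x ^ 2) := by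
      intro x
      rw [show ρ ^ 2 - (ρ * x) ^ 2 = ρ ^ 2 * (1 - x ^ 2) by ring,
        Real.sqrt_mul (sq_nonneg ρ), Real.sqrt_sq hρpos.le]
    have h5 := mul_integral_comp_mul_left (a := (-1:ℝ)) (b := (1:ℝ)) (c := ρ)
      (f := fun v => Real.sqrt (ρ ^ 2 - v ^ 2))
    have h5' : ρ * ∫ x in (-1:ℝ)..1, Real.sqrt (ρ ^ 2 - (ρ * x) ^ 2)
        = ∫ x in (-ρ)..ρ, Real.sqrt (ρ ^ 2 - x ^ 2) := by simpa using h5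
    rw [h1, ← h5']
    simp only [h4]
    rw [intervalIntegral.integral_const_mul, integral_sqrt_one_sub_sq]
    ring
  -- choose endpoints and sign
  have hXap : X ap - c = ρ := by rw [hρdef, hcdef, hMdef, hmdef]; ring
  have hXam : X am - c = -ρ := by rw [hρdef, hcdef, hMdef, hmdef]; ring
  obtain ⟨a, b, η, hamem, hbmem, hab, hη2, hKab⟩ :
      ∃ a b η : ℝ, a ∈ Icc (0:ℝ) 1 ∧ b ∈ Icc (0:ℝ) 1 ∧ a ≤ b ∧ η ^ 2 = 1 ∧
        η * (K (X b - c) - K (X a - c)) = K (-ρ) - K ρ := by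
    rcases le_total ap am with hor | hor
    · exact ⟨ap, am, 1, hap, ham, hor, one_pow 2, by rw [hXam, hXap, one_mul]⟩
    · exact ⟨am, ap, -1, ham, hap, hor, by norm_num, by rw [hXam, hXap]; ring⟩
  have hsubI : Icc a b ⊆ Icc (0:ℝ) 1 := Icc_subset_Icc hamem.1 hbmem.2
  have hsubO : Ioo a b ⊆ Ioo (0:ℝ) 1 := Ioo_subset_Ioo hamem.1 hbmem.2
  have huab : Set.uIcc a b = Icc a b := uIcc_of_le hab
  -- FTC for the middle part
  have hintsq : IntervalIntegrable (fun α => Real.sqrt (ρ ^ 2 - (X α - c) ^ 2) * Xd α)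
      volume a b := by
    apply ContinuousOn.intervalIntegrable
    rw [huab]
    exact (Real.continuous_sqrt.comp_continuousOn (continuousOn_const.sub
      (((hXc.mono hsubI).sub continuousOn_const).pow 2))).mul (hXdc.mono hsubI)
  have hmid : ∫ α in a..b, Real.sqrt (ρ ^ 2 - (X α - c) ^ 2) * Xd α
      = K (X b - c) - K (X a - c) := by
    have hcont : ContinuousOn (fun α => K (X α - c)) (Icc a b) :=
      hKcont.comp_continuousOn ((hXc.mono hsubI).sub continuousOn_const)
    apply intervalIntegral.integral_eq_sub_of_hasDeriv_right_of_le hab hcont ?_ hintsq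
    intro x hx
    have hcomp := (hK (X x - c)).comp x ((hXd' x (hsubO hx)).sub_const c)
    exact hcomp.hasDerivWithinAt
  -- integral identities over [0,1]
  have hYint : ∫ α in (0:ℝ)..1, Yd α = 0 := by
    rw [intervalIntegral.integral_eq_sub_of_hasDeriv_right_of_le h01 hYc
      (fun x hx => (hYd' x hx).hasDerivWithinAt) (intCI hYdc)]
    simp [hYdef]
  have hXYint : ∫ α in (0:ℝ)..1, (Xd α * Y α + X α * Yd α) = 0 := by
    rw [intervalIntegral.integral_eq_sub_of_hasDeriv_right_of_le h01 (hXc.mul hYc)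
      (fun x hx => ((hXd' x hx).mul (hYd' x hx)).hasDerivWithinAt)
      (intCI ((hXdc.mul hYc).add (hXc.mul hYdc)))]
    simp [hYdef]
  have hxhat : ∫ α in (0:ℝ)..1, (X α - c) * Yd α = π / 2 * ∫ α in (0:ℝ)..1, r α ^ 2 := by
    have hptw : ∀ α : ℝ, (X α - c) * Yd α
        = π / 2 * r α ^ 2 + (1 / 2) * (Xd α * Y α + X α * Yd α) - c * Yd α := by
      intro α
      simp only [hXdef, hYdef, hXddef, hYddef]
      linear_combination (π / 2 * r α ^ 2) * (Real.sin_sq_add_cos_sq (π * α))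
    have intA : IntervalIntegrable (fun α => π / 2 * r α ^ 2) volume 0 1 :=
      intCI (continuousOn_const.mul (hrc.pow 2))
    have intB : IntervalIntegrable (fun α => (1 / 2 : ℝ) * (Xd α * Y α + X α * Yd α)) volume 0 1 :=
      intCI (continuousOn_const.mul ((hXdc.mul hYc).add (hXc.mul hYdc)))
    have intC : IntervalIntegrable (fun α => c * Yd α) volume 0 1 :=
      intCI (continuousOn_const.mul hYdc)
    rw [intervalIntegral.integral_congr (g := fun α =>
        π / 2 * r α ^ 2 + (1 / 2) * (Xd α * Y α + X α * Yd α) - c * Yd α)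
        (fun α _ => hptw α),
      intervalIntegral.integral_sub (intA.add intB) intC,
      intervalIntegral.integral_add intA intB,
      intervalIntegral.integral_const_mul, intervalIntegral.integral_const_mul,
      intervalIntegral.integral_const_mul, hXYint, hYint]
    ring
  -- pointwise bounds
  set F : ℝ → ℝ := fun α => Real.sqrt (Xd α ^ 2 + Yd α ^ 2) with hFdef
  have hFc : ContinuousOn F (Icc 0 1) :=
    Real.continuous_sqrt.comp_continuousOn ((hXdc.pow 2).add (hYdc.pow 2))
  have hpt1 : ∀ α ∈ Icc (0:ℝ) 1,
      (X α - c) * Yd α - η * (Real.sqrt (ρ ^ 2 - (X α - c) ^ 2) * Xd α) ≤ ρ * F α := by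
    intro α hα
    have hnn : 0 ≤ ρ ^ 2 - (X α - c) ^ 2 := by linarith [hbsq α hα]
    have h2 := two_cs (X α - c) (Yd α) (-(η * Real.sqrt (ρ ^ 2 - (X α - c) ^ 2))) (Xd α)
    have hs : Real.sqrt ((X α - c) ^ 2 + (-(η * Real.sqrt (ρ ^ 2 - (X α - c) ^ 2))) ^ 2) = ρ := by
      rw [show (X α - c) ^ 2 + (-(η * Real.sqrt (ρ ^ 2 - (X α - c) ^ 2))) ^ 2
          = (X α - c) ^ 2 + η ^ 2 * Real.sqrt (ρ ^ 2 - (X α - c) ^ 2) ^ 2 by ring,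
        hη2, Real.sq_sqrt hnn,
        show (X α - c) ^ 2 + 1 * (ρ ^ 2 - (X α - c) ^ 2) = ρ ^ 2 by ring]
      exact Real.sqrt_sq hρpos.le
    rw [hs, show Yd α ^ 2 + Xd α ^ 2 = Xd α ^ 2 + Yd α ^ 2 from add_comm _ _] at h2
    have e : (X α - c) * Yd α - η * (Real.sqrt (ρ ^ 2 - (X α - c) ^ 2) * Xd α)
        = (X α - c) * Yd α + (-(η * Real.sqrt (ρ ^ 2 - (X α - c) ^ 2))) * Xd α := by ring
    rw [e, hFdef]
    exact h2
  have hcmρ : c - ρ = m := by rw [hcdef, hρdef]; ring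
  have hcpρ : c + ρ = M := by rw [hcdef, hρdef]; ring
  have hpt2 : ∀ α ∈ Icc (0:ℝ) 1, (X α - c) * Yd α ≤ ρ * F α := by
    intro α hα
    obtain ⟨hl, hrr⟩ := hbnd α hα
    have h1 : |X α - c| ≤ ρ := abs_le.2 ⟨by linarith, by linarith⟩
    have h2 : |Yd α| ≤ F α := by
      rw [hFdef, ← Real.sqrt_sq_eq_abs]
      exact Real.sqrt_le_sqrt (by nlinarith [sq_nonneg (Xd α)])
    calc (X α - c) * Yd α ≤ |(X α - c) * Yd α| := le_abs_self _
      _ = |X α - c| * |Yd α| := abs_mul _ _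
      _ ≤ ρ * F α := mul_le_mul h1 h2 (abs_nonneg _) hρpos.le
  -- splitting and assembling
  have hmemu : ∀ {u : ℝ}, u ∈ Icc (0:ℝ) 1 → u ∈ Set.uIcc (0:ℝ) 1 := by
    intro u hu; rwa [huIcc]
  have hsubu : ∀ {u v : ℝ}, u ∈ Icc (0:ℝ) 1 → v ∈ Icc (0:ℝ) 1 →
      Set.uIcc u v ⊆ Set.uIcc (0:ℝ) 1 := fun hu hv =>
    Set.uIcc_subset_uIcc (hmemu hu) (hmemu hv)
  have hmem0 : (0:ℝ) ∈ Icc (0:ℝ) 1 := left_mem_Icc.2 h01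
  have hmem1 : (1:ℝ) ∈ Icc (0:ℝ) 1 := right_mem_Icc.2 h01
  have hintxy : IntervalIntegrable (fun α => (X α - c) * Yd α) volume 0 1 :=
    intCI ((hXc.sub continuousOn_const).mul hYdc)
  have hintρF : IntervalIntegrable (fun α => ρ * F α) volume 0 1 :=
    intCI (continuousOn_const.mul hFc)
  have hI0a := hintxy.mono_set (hsubu hmem0 hamem)
  have hIab := hintxy.mono_set (hsubu hamem hbmem)
  have hIb1 := hintxy.mono_set (hsubu hbmem hmem1)
  have hI0b := hintxy.mono_set (hsubu hmem0 hbmem)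
  have hF0a := hintρF.mono_set (hsubu hmem0 hamem)
  have hFab := hintρF.mono_set (hsubu hamem hbmem)
  have hFb1 := hintρF.mono_set (hsubu hbmem hmem1)
  have hF0b := hintρF.mono_set (hsubu hmem0 hbmem)
  have hsplit1 := intervalIntegral.integral_add_adjacent_intervals hI0a hIab
  have hsplit2 := intervalIntegral.integral_add_adjacent_intervals hI0b hIb1
  have hsplitF1 := intervalIntegral.integral_add_adjacent_intervals hF0a hFab
  have hsplitF2 := intervalIntegral.integral_add_adjacent_intervals hF0b hFb1
  have hB1 : ∫ α in (0:ℝ)..a, (X α - c) * Yd α ≤ ∫ α in (0:ℝ)..a, ρ * F α :=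
    intervalIntegral.integral_mono_on hamem.1 hI0a hF0a
      (fun x hx => hpt2 x (Icc_subset_Icc le_rfl hamem.2 hx))
  have hB3 : ∫ α in b..1, (X α - c) * Yd α ≤ ∫ α in b..1, ρ * F α :=
    intervalIntegral.integral_mono_on hbmem.2 hIb1 hFb1
      (fun x hx => hpt2 x (Icc_subset_Icc hbmem.1 le_rfl hx))
  have hB2 : ∫ α in a..b, (X α - c) * Yd α
      ≤ (∫ α in a..b, ρ * F α) + (K (-ρ) - K ρ) := by
    have e2 : ∫ α in a..b, (X α - c) * Yd α
        = (∫ α in a..b, ((X α - c) * Yd α - η * (Real.sqrt (ρ ^ 2 - (X α - c) ^ 2) * Xd α)))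
          + η * ∫ α in a..b, Real.sqrt (ρ ^ 2 - (X α - c) ^ 2) * Xd α := by
      rw [← intervalIntegral.integral_const_mul,
        ← intervalIntegral.integral_add (hIab.sub (hintsq.const_mul η)) (hintsq.const_mul η)]
      exact intervalIntegral.integral_congr fun α _ => by ring
    rw [e2, hmid, hKab]
    have hmono := intervalIntegral.integral_mono_on hab (hIab.sub (hintsq.const_mul η)) hFab
      (fun x hx => hpt1 x (hsubI hx))
    linarith
  have hmain : π / 2 * (∫ α in (0:ℝ)..1, r α ^ 2) + π / 2 * ρ ^ 2
      ≤ ∫ α in (0:ℝ)..1, ρ * F α := by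
    have := hKval
    linarith [hB1, hB2, hB3, hsplit1, hsplit2, hsplitF1, hsplitF2, hxhat]
  -- identify F with the target integrand
  have hFeq : ∫ α in (0:ℝ)..1, F α
      = π * ∫ α in (0:ℝ)..1, Real.sqrt (r α ^ 2 + g α ^ 2 / π ^ 2) := by
    rw [← intervalIntegral.integral_const_mul]
    apply intervalIntegral.integral_congr
    intro α _
    have hid : Xd α ^ 2 + Yd α ^ 2 = π ^ 2 * (r α ^ 2 + g α ^ 2 / π ^ 2) := by
      simp only [hXddef, hYddef]
      have hπ : (π:ℝ) ≠ 0 := Real.pi_ne_zero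
      field_simp
      linear_combination (g α ^ 2 + π ^ 2 * r α ^ 2) * (Real.sin_sq_add_cos_sq (π * α))
    rw [hFdef]
    show Real.sqrt (Xd α ^ 2 + Yd α ^ 2) = π * Real.sqrt (r α ^ 2 + g α ^ 2 / π ^ 2)
    rw [hid, Real.sqrt_mul (sq_nonneg π), Real.sqrt_sq Real.pi_pos.le]
  have hρFtot : ∫ α in (0:ℝ)..1, ρ * F α = ρ * ∫ α in (0:ℝ)..1, F α :=
    intervalIntegral.integral_const_mul ρ F
  -- finish by AM-GM
  have hTnn : 0 ≤ ∫ α in (0:ℝ)..1, r α ^ 2 :=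
    intervalIntegral.integral_nonneg h01 fun u _ => sq_nonneg _
  apply final_amgm _ ρ _ hρpos hTnn
  rw [hρFtot, hFeq] at hmain
  linarith [hmain]

private lemma lemA (p : ℝ) (hp : 0 ≤ p) (r : ℝ → ℝ) (hrc : ContinuousOn r (Icc 0 1))
    (hpos : ∀ α ∈ Icc (0:ℝ) 1, 0 < r α) :
    (∫ α in (0:ℝ)..1, r α ^ ((p + 2) / (p + 1))) ^ ((p + 1) / (p + 2)) ≤
      Real.sqrt (∫ α in (0:ℝ)..1, r α ^ 2) := by
  have h01 : (0:ℝ) ≤ 1 := zero_le_one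
  have huIcc : Set.uIcc (0:ℝ) 1 = Icc 0 1 := uIcc_of_le h01
  have intCI : ∀ {f : ℝ → ℝ}, ContinuousOn f (Icc 0 1) → IntervalIntegrable f volume 0 1 := by
    intro f hf
    exact ContinuousOn.intervalIntegrable (by rwa [huIcc])
  have hp1 : (0:ℝ) < p + 1 := by linarith
  have hp2 : (0:ℝ) < p + 2 := by linarith
  set s : ℝ := (p + 2) / (p + 1) with hsdef
  set θ : ℝ := s / 2 with hθdef
  have hspos : 0 < s := div_pos hp2 hp1
  have hsle2 : s ≤ 2 := by rw [hsdef, div_le_iff₀ hp1]; linarith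
  have hθpos : 0 < θ := by rw [hθdef]; linarith
  have hθle1 : θ ≤ 1 := by rw [hθdef]; linarith
  have hint2 : IntervalIntegrable (fun α => r α ^ 2) volume 0 1 := intCI (hrc.pow 2)
  have hTpos : 0 < ∫ α in (0:ℝ)..1, r α ^ 2 := by
    apply intervalIntegral.intervalIntegral_pos_of_pos_on hint2 _ zero_lt_one
    intro x hx
    exact pow_pos (hpos x (Ioo_subset_Icc_self hx)) 2
  set T : ℝ := ∫ α in (0:ℝ)..1, r α ^ 2 with hTdef
  have hints : IntervalIntegrable (fun α => r α ^ s) volume 0 1 := by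
    apply intCI
    exact ContinuousOn.rpow_const hrc fun x hx => Or.inr hspos.le
  have hpt : ∀ α ∈ Icc (0:ℝ) 1, r α ^ s * T ^ (1 - θ) ≤ θ * r α ^ 2 + (1 - θ) * T := by
    intro α hα
    have h1 : r α ^ s = (r α ^ 2) ^ θ := by
      rw [← Real.rpow_natCast (r α) 2, ← Real.rpow_mul (hpos α hα).le]
      norm_num
      rw [hθdef]
      ring_nf
    rw [h1]
    exact Real.geom_mean_le_arith_mean2_weighted hθpos.le (by linarith)
      (by positivity) hTpos.le (by ring)
  have key : (∫ α in (0:ℝ)..1, r α ^ s) * T ^ (1 - θ) ≤ T := by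
    have h2 : ∫ α in (0:ℝ)..1, (r α ^ s * T ^ (1 - θ))
        ≤ ∫ α in (0:ℝ)..1, (θ * r α ^ 2 + (1 - θ) * T) := by
      apply intervalIntegral.integral_mono_on h01 (hints.mul_const _)
        ((hint2.const_mul θ).add (intervalIntegrable_const)) hpt
    rw [intervalIntegral.integral_mul_const,
      intervalIntegral.integral_add (hint2.const_mul θ) intervalIntegrable_const,
      intervalIntegral.integral_const_mul, intervalIntegral.integral_const] at h2
    simp only [smul_eq_mul] at h2
    rw [← hTdef] at h2
    linarith [h2]
  have hIle : (∫ α in (0:ℝ)..1, r α ^ s) ≤ T ^ θ := by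
    have hTpow : 0 < T ^ (1 - θ) := Real.rpow_pos_of_pos hTpos _
    have key2 : (∫ α in (0:ℝ)..1, r α ^ s) * T ^ (1 - θ) ≤ T ^ θ * T ^ (1 - θ) := by
      have e : T ^ θ * T ^ (1 - θ) = T := by
        rw [← Real.rpow_add hTpos]; norm_num
      rw [e]; exact key
    exact le_of_mul_le_mul_right key2 hTpow
  have hInn : 0 ≤ ∫ α in (0:ℝ)..1, r α ^ s :=
    intervalIntegral.integral_nonneg h01 fun u hu => Real.rpow_nonneg (hpos u hu).le _
  have hfin : (∫ α in (0:ℝ)..1, r α ^ s) ^ ((p + 1) / (p + 2))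
      ≤ (T ^ θ) ^ ((p + 1) / (p + 2)) :=
    Real.rpow_le_rpow hInn hIle (by positivity)
  have heq : (T ^ θ) ^ ((p + 1) / (p + 2)) = Real.sqrt T := by
    rw [← Real.rpow_mul hTpos.le, Real.sqrt_eq_rpow]
    congr 1
    rw [hθdef, hsdef]
    field_simp
  rw [heq] at hfin
  exact hfin

theorem sector_isoperimetric_inequality (p : ℝ) (hp : 0 ≤ p) (r : ℝ → ℝ)
    (hr : ContDiffOn ℝ 1 r (Set.Icc 0 1)) (hpos : ∀ α ∈ Set.Icc (0:ℝ) 1, 0 < r α) :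
    (∫ α in (0:ℝ)..1, r α ^ ((p + 2) / (p + 1))) ^ ((p + 1) / (p + 2)) ≤
      ∫ α in (0:ℝ)..1, Real.sqrt (r α ^ 2 + (deriv r α) ^ 2 / π ^ 2) := by
  set g : ℝ → ℝ := derivWithin r (Set.Icc 0 1) with hgdef
  have hgc : ContinuousOn g (Icc 0 1) :=
    hr.continuousOn_derivWithin (uniqueDiffOn_Icc zero_lt_one) le_rfl
  have hd : ∀ α ∈ Ioo (0:ℝ) 1, HasDerivAt r (g α) α := by
    intro α hα
    have hnh : Icc (0:ℝ) 1 ∈ nhds α := Icc_mem_nhds hα.1 hα.2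
    have h1 : ContDiffAt ℝ 1 r α := (hr α (Ioo_subset_Icc_self hα)).contDiffAt hnh
    have h2 : DifferentiableAt ℝ r α := h1.differentiableAt one_ne_zero
    have h3 := h2.hasDerivAt
    rwa [← derivWithin_of_mem_nhds hnh] at h3
  have hRHS : ∫ α in (0:ℝ)..1, Real.sqrt (r α ^ 2 + (deriv r α) ^ 2 / π ^ 2)
      = ∫ α in (0:ℝ)..1, Real.sqrt (r α ^ 2 + g α ^ 2 / π ^ 2) := by
    apply intervalIntegral.integral_congr_ae
    have h1 : ∀ᵐ x : ℝ, x ≠ 1 := by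
      have h2 : ({(1:ℝ)} : Set ℝ)ᶜ ∈ (MeasureTheory.ae (volume : Measure ℝ)) :=
        MeasureTheory.compl_mem_ae_iff.2 (measure_singleton 1)
      filter_upwards [h2] with x hx
      simpa using hx
    filter_upwards [h1] with x hx hmem
    rw [Set.uIoc_of_le zero_le_one] at hmem
    have hio : x ∈ Ioo (0:ℝ) 1 := ⟨hmem.1, lt_of_le_of_ne hmem.2 hx⟩
    have : g x = deriv r x := derivWithin_of_mem_nhds (Icc_mem_nhds hio.1 hio.2)
    rw [this]
  rw [hRHS]
  exact le_trans (lemA p hp r hr.continuousOn hpos)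
    (lemB r g hr.continuousOn hgc hd hpos)
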